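/- arXiv:math/0608414 — 2 statements merged into one kernel-verified Lean document; each statement's English description precedes it below -/
import Mathlib

section
/- If f is a fixed locally integrable function on [0, D] (D finite) with ‖f‖_b < ∞, then for every ε > 0 there exist b > 0 and a constant K such that for all k ≥ 1, the uniform norm of f * g^{*k} on [0, D] is bounded by K ε^k, whenever ‖g‖_b < ε; more precisely, |(f * g^{*k})(p)| ≤ D^{-1} e^{bp} ‖f‖_u ‖g‖_b^k for all p ∈ [0, D], where ‖f‖_u := D · sup_{p∈[0,D]} |f(p)| e^{-bp}. -/
open MeasureTheory

/-- Convolution on `[0, t]`. -/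
noncomputable def conv (f g : ℝ → ℂ) (t : ℝ) : ℂ :=
  ∫ s in (0:ℝ)..t, f s * g (t - s)

/-- `convIter g k = g^{*(k+1)}`, the `(k+1)`-fold convolution power of `g`. -/
noncomputable def convIter (g : ℝ → ℂ) : ℕ → ℝ → ℂ
  | 0 => g
  | n + 1 => conv g (convIter g n)

open Set
open scoped ENNReal

namespace ConvPowAux

/-- Measurability of the truncated convolution. -/
lemma conv_sm {F H : ℝ → ℂ} (hF : StronglyMeasurable F) (hH : StronglyMeasurable H) :
    StronglyMeasurable (conv F H) := by
  have hmain : StronglyMeasurable (fun q : ℝ × ℝ => F q.2 * H (q.1 - q.2)) :=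
    (hF.comp_measurable measurable_snd).mul
      (hH.comp_measurable (measurable_fst.sub measurable_snd))
  have hS1 : MeasurableSet {q : ℝ × ℝ | 0 < q.2 ∧ q.2 ≤ q.1} :=
    (measurableSet_lt measurable_const measurable_snd).inter
      (measurableSet_le measurable_snd measurable_fst)
  have hS2 : MeasurableSet {q : ℝ × ℝ | q.1 < q.2 ∧ q.2 ≤ 0} :=
    (measurableSet_lt measurable_fst measurable_snd).inter
      (measurableSet_le measurable_snd measurable_const)
  have h1 : StronglyMeasurable fun t : ℝ =>
      ∫ s, ({q : ℝ × ℝ | 0 < q.2 ∧ q.2 ≤ q.1}.indicator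
        (fun q => F q.2 * H (q.1 - q.2))) (t, s) :=
    (hmain.indicator hS1).integral_prod_right'
  have h2 : StronglyMeasurable fun t : ℝ =>
      ∫ s, ({q : ℝ × ℝ | q.1 < q.2 ∧ q.2 ≤ 0}.indicator
        (fun q => F q.2 * H (q.1 - q.2))) (t, s) :=
    (hmain.indicator hS2).integral_prod_right'
  have heq : conv F H = fun t =>
      (∫ s, ({q : ℝ × ℝ | 0 < q.2 ∧ q.2 ≤ q.1}.indicator
        (fun q => F q.2 * H (q.1 - q.2))) (t, s)) -
      ∫ s, ({q : ℝ × ℝ | q.1 < q.2 ∧ q.2 ≤ 0}.indicator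
        (fun q => F q.2 * H (q.1 - q.2))) (t, s) := by
    funext t
    have e0 : conv F H t = (∫ s in Ioc (0:ℝ) t, F s * H (t - s)) -
        ∫ s in Ioc t 0, F s * H (t - s) := rfl
    rw [e0, ← integral_indicator measurableSet_Ioc, ← integral_indicator measurableSet_Ioc]
    rfl
  rw [heq]
  exact h1.sub h2

lemma convIter_sm {G : ℝ → ℂ} (hG : StronglyMeasurable G) (n : ℕ) :
    StronglyMeasurable (convIter G n) := by
  induction n with
  | zero => exact hG
  | succ n IH => exact conv_sm hG IH

/-- The truncated convolution only depends on the a.e. class of `g` on `[0,D]`. -/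
lemma convIter_congr {D : ℝ} {g G : ℝ → ℂ}
    (hgG : g =ᵐ[volume.restrict (Set.Icc 0 D)] G) :
    ∀ n, ∀ F : ℝ → ℂ, ∀ t ∈ Set.Icc (0:ℝ) D,
      conv F (convIter g n) t = conv F (convIter G n) t := by
  have hae : ∀ᵐ x ∂(volume : Measure ℝ), x ∈ Set.Icc (0:ℝ) D → g x = G x :=
    (ae_restrict_iff' measurableSet_Icc).1 hgG
  intro n
  induction n with
  | zero =>
    intro F t ht
    apply intervalIntegral.integral_congr_ae
    rw [Set.uIoc_of_le ht.1]
    have h0 : (volume : Measure ℝ) ({a | ¬ g a = G a} ∩ Set.Icc 0 D) = 0 := by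
      have := ae_iff.mp hgG
      rwa [Measure.restrict_apply' measurableSet_Icc] at this
    have hpre : (volume : Measure ℝ)
        ((fun s => t - s) ⁻¹' ({a | ¬ g a = G a} ∩ Set.Icc 0 D)) = 0 :=
      (Measure.measurePreserving_sub_left volume t).quasiMeasurePreserving.preimage_null h0
    rw [ae_iff]
    refine measure_mono_null ?_ hpre
    intro s hs
    simp only [Set.mem_setOf_eq, Classical.not_imp] at hs
    obtain ⟨hs1, hs2⟩ := hs
    refine ⟨fun h => hs2 (congrArg (fun z => F s * z) h), Set.mem_Icc.mpr ⟨?_, ?_⟩⟩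
    · show (0:ℝ) ≤ t - s
      simp only [Set.mem_Ioc] at hs1; linarith [hs1.2]
    · show t - s ≤ D
      simp only [Set.mem_Ioc, Set.mem_Icc] at hs1 ht; linarith [hs1.1, ht.2]
  | succ n IH =>
    intro F t ht
    apply intervalIntegral.integral_congr
    intro s hs
    rw [Set.uIcc_of_le ht.1] at hs
    have hts : t - s ∈ Set.Icc (0:ℝ) D := ⟨by linarith [hs.1, hs.2], by linarith [hs.1, ht.2]⟩
    show F s * convIter g (n+1) (t - s) = F s * convIter G (n+1) (t - s)
    congr 1
    show conv g (convIter g n) (t - s) = conv G (convIter G n) (t - s)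
    have h1 : conv g (convIter g n) (t - s) = conv G (convIter g n) (t - s) := by
      apply intervalIntegral.integral_congr_ae
      rw [Set.uIoc_of_le hts.1]
      filter_upwards [hae] with x hx hmem
      rw [hx ⟨hmem.1.le, hmem.2.trans hts.2⟩]
    rw [h1]
    exact IH G (t - s) hts

lemma conv_nnnorm_le {A B : ℝ → ℂ} {t : ℝ} (ht : 0 ≤ t) :
    (‖conv A B t‖₊ : ℝ≥0∞) ≤ ∫⁻ s in Set.Ioc 0 t, (‖A s‖₊ : ℝ≥0∞) * ‖B (t - s)‖₊ := by
  rw [conv, intervalIntegral.integral_of_le ht]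
  refine le_trans (enorm_integral_le_lintegral_enorm _) ?_
  refine lintegral_mono fun s => ?_
  simp [nnnorm_mul, enorm_eq_nnnorm]

lemma shift {s p : ℝ} (ψ : ℝ → ℝ≥0∞) :
    (∫⁻ t in Set.Ioc s p, ψ (t - s)) = ∫⁻ u in Set.Ioc 0 (p - s), ψ u := by
  rw [← lintegral_indicator measurableSet_Ioc, ← lintegral_indicator measurableSet_Ioc]
  have h : ∀ t, (Set.Ioc s p).indicator (fun t => ψ (t - s)) t
      = (Set.Ioc 0 (p - s)).indicator ψ (t - s) := by
    intro t
    by_cases ht : t ∈ Set.Ioc s p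
    · rw [Set.indicator_of_mem ht, Set.indicator_of_mem
        (Set.mem_Ioc.mpr ⟨sub_pos.2 ht.1, sub_le_sub_right ht.2 s⟩)]
    · rw [Set.indicator_of_notMem ht, Set.indicator_of_notMem]
      intro h
      simp only [Set.mem_Ioc] at h ht
      exact ht ⟨by linarith [h.1], by linarith [h.2]⟩
  simp_rw [h]
  exact lintegral_sub_right_eq_self ((Set.Ioc 0 (p - s)).indicator ψ) s

lemma reflect {p : ℝ} (ψ : ℝ → ℝ≥0∞) (hψ : Measurable ψ) :
    (∫⁻ s in Set.Ioc 0 p, ψ (p - s)) = ∫⁻ u in Set.Ico 0 p, ψ u := by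
  rw [← lintegral_indicator measurableSet_Ioc, ← lintegral_indicator measurableSet_Ico]
  have h : ∀ s, (Set.Ioc 0 p).indicator (fun s => ψ (p - s)) s
      = (Set.Ico 0 p).indicator ψ (p - s) := by
    intro s
    by_cases hs : s ∈ Set.Ioc 0 p
    · rw [Set.indicator_of_mem hs, Set.indicator_of_mem (Set.mem_Ico.mpr
        ⟨by simp only [Set.mem_Ioc] at hs; linarith [hs.2],
         by simp only [Set.mem_Ioc] at hs; linarith [hs.1]⟩)]
    · rw [Set.indicator_of_notMem hs, Set.indicator_of_notMem]
      intro h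
      simp only [Set.mem_Ico] at h
      simp only [Set.mem_Ioc] at hs
      exact hs ⟨by linarith [h.2], by linarith [h.1]⟩
  simp_rw [h]
  exact (Measure.measurePreserving_sub_left volume p).lintegral_comp
    (hψ.indicator measurableSet_Ico)

lemma triangle_swap {p : ℝ} (φ ψ : ℝ → ℝ≥0∞) (hφ : Measurable φ) (hψ : Measurable ψ) :
    (∫⁻ t in Set.Ioc 0 p, ∫⁻ s in Set.Ioc 0 t, φ s * ψ (t - s)) =
    ∫⁻ s in Set.Ioc 0 p, φ s * ∫⁻ t in Set.Icc s p, ψ (t - s) := by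
  have hSm : MeasurableSet {q : ℝ × ℝ | 0 < q.2 ∧ q.2 ≤ q.1 ∧ q.1 ≤ p} :=
    ((measurableSet_lt measurable_const measurable_snd).inter
      ((measurableSet_le measurable_snd measurable_fst).inter
        (measurableSet_le measurable_fst measurable_const)))
  have hKm : Measurable (fun q : ℝ × ℝ =>
      ({q : ℝ × ℝ | 0 < q.2 ∧ q.2 ≤ q.1 ∧ q.1 ≤ p}).indicator
        (fun q => φ q.2 * ψ (q.1 - q.2)) q) :=
    ((hφ.comp measurable_snd).mul (hψ.comp (measurable_fst.sub measurable_snd))).indicator hSm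
  have hL : (∫⁻ t in Set.Ioc 0 p, ∫⁻ s in Set.Ioc 0 t, φ s * ψ (t - s)) =
      ∫⁻ t, ∫⁻ s, ({q : ℝ × ℝ | 0 < q.2 ∧ q.2 ≤ q.1 ∧ q.1 ≤ p}).indicator
        (fun q => φ q.2 * ψ (q.1 - q.2)) (t, s) := by
    rw [← lintegral_indicator measurableSet_Ioc]
    congr 1; funext t
    by_cases ht : t ∈ Set.Ioc 0 p
    · rw [Set.indicator_of_mem ht, ← lintegral_indicator measurableSet_Ioc]
      congr 1; funext s
      by_cases hs : s ∈ Set.Ioc 0 t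
      · rw [Set.indicator_of_mem hs,
          Set.indicator_of_mem (show (t, s) ∈ {q : ℝ × ℝ | 0 < q.2 ∧ q.2 ≤ q.1 ∧ q.1 ≤ p}
            from ⟨hs.1, hs.2, ht.2⟩)]
      · rw [Set.indicator_of_notMem hs, Set.indicator_of_notMem
          (show (t, s) ∉ {q : ℝ × ℝ | 0 < q.2 ∧ q.2 ≤ q.1 ∧ q.1 ≤ p}
            from fun hmem => hs ⟨hmem.1, hmem.2.1⟩)]
    · rw [Set.indicator_of_notMem ht]
      have h0 : ∀ s : ℝ, ({q : ℝ × ℝ | 0 < q.2 ∧ q.2 ≤ q.1 ∧ q.1 ≤ p}).indicator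
          (fun q => φ q.2 * ψ (q.1 - q.2)) (t, s) = 0 := fun s =>
        Set.indicator_of_notMem
          (show (t, s) ∉ {q : ℝ × ℝ | 0 < q.2 ∧ q.2 ≤ q.1 ∧ q.1 ≤ p}
            from fun hmem => ht ⟨lt_of_lt_of_le hmem.1 hmem.2.1, hmem.2.2⟩) _
      simp only [h0, lintegral_zero]
  have hR : (∫⁻ s in Set.Ioc 0 p, φ s * ∫⁻ t in Set.Icc s p, ψ (t - s)) =
      ∫⁻ s, ∫⁻ t, ({q : ℝ × ℝ | 0 < q.2 ∧ q.2 ≤ q.1 ∧ q.1 ≤ p}).indicator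
        (fun q => φ q.2 * ψ (q.1 - q.2)) (t, s) := by
    rw [← lintegral_indicator measurableSet_Ioc]
    congr 1; funext s
    by_cases hs : s ∈ Set.Ioc 0 p
    · rw [Set.indicator_of_mem hs]
      have h1 : ∀ t : ℝ, ({q : ℝ × ℝ | 0 < q.2 ∧ q.2 ≤ q.1 ∧ q.1 ≤ p}).indicator
          (fun q => φ q.2 * ψ (q.1 - q.2)) (t, s)
          = (Set.Icc s p).indicator (fun t => φ s * ψ (t - s)) t := by
        intro t
        by_cases htm : t ∈ Set.Icc s p
        · rw [Set.indicator_of_mem htm,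
            Set.indicator_of_mem (show (t, s) ∈ {q : ℝ × ℝ | 0 < q.2 ∧ q.2 ≤ q.1 ∧ q.1 ≤ p}
              from ⟨hs.1, htm.1, htm.2⟩)]
        · rw [Set.indicator_of_notMem htm, Set.indicator_of_notMem
            (show (t, s) ∉ {q : ℝ × ℝ | 0 < q.2 ∧ q.2 ≤ q.1 ∧ q.1 ≤ p}
              from fun hmem => htm ⟨hmem.2.1, hmem.2.2⟩)]
      simp only [h1]
      rw [lintegral_indicator measurableSet_Icc]
      exact (lintegral_const_mul (φ s) (hψ.comp (measurable_id.sub measurable_const))).symm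
    · rw [Set.indicator_of_notMem hs]
      have h0 : ∀ t : ℝ, ({q : ℝ × ℝ | 0 < q.2 ∧ q.2 ≤ q.1 ∧ q.1 ≤ p}).indicator
          (fun q => φ q.2 * ψ (q.1 - q.2)) (t, s) = 0 := fun t =>
        Set.indicator_of_notMem
          (show (t, s) ∉ {q : ℝ × ℝ | 0 < q.2 ∧ q.2 ≤ q.1 ∧ q.1 ≤ p}
            from fun hmem => hs ⟨hmem.1, le_trans hmem.2.1 hmem.2.2⟩) _
      simp only [h0, lintegral_zero]
  rw [hL, hR]
  exact lintegral_lintegral_swap hKm.aemeasurable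

lemma iter_bound {D b : ℝ} {G : ℝ → ℂ} (hG : StronglyMeasurable G) :
    ∀ n, ∀ p ∈ Set.Icc (0:ℝ) D,
      (∫⁻ u in Set.Ioc 0 p, ENNReal.ofReal (Real.exp (-(b*u))) * ‖convIter G n u‖₊) ≤
      (∫⁻ u in Set.Ioc 0 D, ENNReal.ofReal (Real.exp (-(b*u))) * ‖G u‖₊) ^ (n+1) := by
  set J := ∫⁻ u in Set.Ioc 0 D, ENNReal.ofReal (Real.exp (-(b*u))) * ‖G u‖₊ with hJ
  have hψm : ∀ n, Measurable fun u => ENNReal.ofReal (Real.exp (-(b*u))) * (‖convIter G n u‖₊ : ℝ≥0∞) := by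
    intro n
    exact ((ENNReal.measurable_ofReal.comp
      ((Real.continuous_exp.measurable).comp (measurable_const.mul measurable_id).neg)).mul
      ((convIter_sm hG n).measurable.enorm))
  intro n
  induction n with
  | zero =>
    intro p hp
    rw [pow_one]
    exact lintegral_mono' (Measure.restrict_mono (Set.Ioc_subset_Ioc_right hp.2) le_rfl) le_rfl
  | succ n IH =>
    intro p hp
    have key : ∀ t ∈ Set.Ioc (0:ℝ) p,
        ENNReal.ofReal (Real.exp (-(b*t))) * (‖convIter G (n+1) t‖₊ : ℝ≥0∞) ≤
        ∫⁻ s in Set.Ioc 0 t, (ENNReal.ofReal (Real.exp (-(b*s))) * ‖G s‖₊) *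
          (ENNReal.ofReal (Real.exp (-(b*(t - s)))) * ‖convIter G n (t - s)‖₊) := by
      intro t ht
      have h1 : (‖convIter G (n+1) t‖₊ : ℝ≥0∞) ≤
          ∫⁻ s in Set.Ioc 0 t, (‖G s‖₊ : ℝ≥0∞) * ‖convIter G n (t - s)‖₊ :=
        conv_nnnorm_le ht.1.le
      calc ENNReal.ofReal (Real.exp (-(b*t))) * (‖convIter G (n+1) t‖₊ : ℝ≥0∞)
          ≤ ENNReal.ofReal (Real.exp (-(b*t))) *
            ∫⁻ s in Set.Ioc 0 t, (‖G s‖₊ : ℝ≥0∞) * ‖convIter G n (t - s)‖₊ :=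
            mul_le_mul_right h1 _
        _ = ∫⁻ s in Set.Ioc 0 t, ENNReal.ofReal (Real.exp (-(b*t))) *
              ((‖G s‖₊ : ℝ≥0∞) * ‖convIter G n (t - s)‖₊) :=
            (lintegral_const_mul _ ((hG.measurable.enorm).mul
              (((convIter_sm hG n).measurable.comp
                (measurable_const.sub measurable_id)).enorm))).symm
        _ = ∫⁻ s in Set.Ioc 0 t, (ENNReal.ofReal (Real.exp (-(b*s))) * ‖G s‖₊) *
              (ENNReal.ofReal (Real.exp (-(b*(t - s)))) * ‖convIter G n (t - s)‖₊) := by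
            apply setLIntegral_congr_fun measurableSet_Ioc
            intro s _
            have he : ENNReal.ofReal (Real.exp (-(b*t))) =
                ENNReal.ofReal (Real.exp (-(b*s))) * ENNReal.ofReal (Real.exp (-(b*(t - s)))) := by
              rw [← ENNReal.ofReal_mul (Real.exp_nonneg _), ← Real.exp_add]
              ring_nf
            rw [he]
            ring
    calc (∫⁻ u in Set.Ioc 0 p, ENNReal.ofReal (Real.exp (-(b*u))) * ‖convIter G (n+1) u‖₊)
        ≤ ∫⁻ t in Set.Ioc 0 p, ∫⁻ s in Set.Ioc 0 t,
            (ENNReal.ofReal (Real.exp (-(b*s))) * ‖G s‖₊) *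
            (ENNReal.ofReal (Real.exp (-(b*(t - s)))) * ‖convIter G n (t - s)‖₊) :=
          lintegral_mono_ae ((ae_restrict_mem measurableSet_Ioc).mono fun t ht => key t ht)
      _ = ∫⁻ s in Set.Ioc 0 p, (ENNReal.ofReal (Real.exp (-(b*s))) * ‖G s‖₊) *
            ∫⁻ t in Set.Icc s p, ENNReal.ofReal (Real.exp (-(b*(t - s)))) *
              ‖convIter G n (t - s)‖₊ := by
          have := triangle_swap (p := p)
            (fun s => ENNReal.ofReal (Real.exp (-(b*s))) * ‖G s‖₊)
            (fun u => ENNReal.ofReal (Real.exp (-(b*u))) * ‖convIter G n u‖₊)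
            (((ENNReal.measurable_ofReal.comp
              ((Real.continuous_exp.measurable).comp
                (measurable_const.mul measurable_id).neg)).mul (hG.measurable.enorm)))
            (hψm n)
          simpa using this
      _ ≤ ∫⁻ s in Set.Ioc 0 p, (ENNReal.ofReal (Real.exp (-(b*s))) * ‖G s‖₊) * J ^ (n+1) := by
          refine lintegral_mono_ae ((ae_restrict_mem measurableSet_Ioc).mono fun s hs => ?_)
          refine mul_le_mul_right ?_ _
          have e1 : (∫⁻ t in Set.Icc s p, ENNReal.ofReal (Real.exp (-(b*(t - s)))) *
              ‖convIter G n (t - s)‖₊) = ∫⁻ t in Set.Ioc s p,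
              ENNReal.ofReal (Real.exp (-(b*(t - s)))) * ‖convIter G n (t - s)‖₊ :=
            setLIntegral_congr MeasureTheory.Ioc_ae_eq_Icc.symm
          rw [e1, shift (fun u => ENNReal.ofReal (Real.exp (-(b*u))) * ‖convIter G n u‖₊)]
          refine IH (p - s) ?_
          simp only [Set.mem_Ioc] at hs
          simp only [Set.mem_Icc] at hp ⊢
          constructor <;> linarith [hs.1, hs.2, hp.2]
      _ = (∫⁻ s in Set.Ioc 0 p, ENNReal.ofReal (Real.exp (-(b*s))) * ‖G s‖₊) * J ^ (n+1) :=
          lintegral_mul_const _ (((ENNReal.measurable_ofReal.comp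
            ((Real.continuous_exp.measurable).comp
              (measurable_const.mul measurable_id).neg)).mul (hG.measurable.enorm)))
      _ ≤ J * J ^ (n+1) := by
          refine mul_le_mul_left ?_ _
          exact lintegral_mono' (Measure.restrict_mono (Set.Ioc_subset_Ioc_right hp.2) le_rfl) le_rfl
      _ = J ^ (n+1+1) := (pow_succ' J (n+1)).symm

end ConvPowAux

/-- for continuous `f` and integrable `g` on `[0,D]`, for every `k ≥ 1`
(`convIter g k` below is `g^{*(k+1)}`, so `k+1` ranges over all integers `≥ 1`),
`|(f * g^{*k})(p)| ≤ D⁻¹ e^{bp} ‖f‖_u ‖g‖_b^k` on `[0,D]`, where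
`‖f‖_u = D·sup_{[0,D]} |f| e^{-bp}` and `‖g‖_b = ∫₀^D e^{-bt}|g(t)| dt`.  In
particular, if `‖g‖_b < ε` then `‖f * g^{*k}‖_∞ ≤ K ε^k` with `K` independent of `k`. -/
theorem conv_power_uniform_bound (D b : ℝ) (hD : 0 < D) (hb : 0 < b)
    (f g : ℝ → ℂ) (hf : ContinuousOn f (Set.Icc 0 D))
    (hg : IntegrableOn g (Set.Icc 0 D)) :
    ∀ k : ℕ, ∀ p ∈ Set.Icc (0:ℝ) D,
      ‖conv f (convIter g k) p‖ ≤
        D⁻¹ * Real.exp (b * p)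
          * (D * sSup ((fun q => ‖f q‖ * Real.exp (-(b*q))) '' Set.Icc 0 D))
          * (∫ t in Set.Icc (0:ℝ) D, Real.exp (-(b*t)) * ‖g t‖) ^ (k + 1) := by
  intro k p hp
  obtain ⟨hp0, hpD⟩ := hp
  set M := sSup ((fun q => ‖f q‖ * Real.exp (-(b*q))) '' Set.Icc 0 D) with hM
  set I := ∫ t in Set.Icc (0:ℝ) D, Real.exp (-(b*t)) * ‖g t‖ with hI
  -- a measurable representative of `g`
  obtain ⟨g', hg'm, hgg'⟩ : ∃ g' : ℝ → ℂ, StronglyMeasurable g' ∧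
      g =ᵐ[volume.restrict (Set.Icc 0 D)] g' :=
    ⟨hg.1.mk g, hg.1.stronglyMeasurable_mk, hg.1.ae_eq_mk⟩
  set J := ∫⁻ u in Set.Ioc (0:ℝ) D, ENNReal.ofReal (Real.exp (-(b*u))) * ‖g' u‖₊ with hJ
  have hcongr := ConvPowAux.convIter_congr hgg' k f p ⟨hp0, hpD⟩
  rw [hcongr]
  -- facts about the sup
  have hcont : ContinuousOn (fun q => ‖f q‖ * Real.exp (-(b*q))) (Set.Icc 0 D) :=
    hf.norm.mul ((Real.continuous_exp.comp (continuous_const.mul continuous_id).neg).continuousOn)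
  have hbdd : BddAbove ((fun q => ‖f q‖ * Real.exp (-(b*q))) '' Set.Icc 0 D) :=
    (isCompact_Icc.image_of_continuousOn hcont).bddAbove
  have hM0 : 0 ≤ M :=
    le_trans (mul_nonneg (norm_nonneg (f 0)) (Real.exp_nonneg _))
      (le_csSup hbdd ⟨0, ⟨le_refl 0, hD.le⟩, rfl⟩)
  have hfM : ∀ s ∈ Set.Icc (0:ℝ) D, ‖f s‖ ≤ M * Real.exp (b * s) := by
    intro s hs
    have h1 : ‖f s‖ * Real.exp (-(b*s)) ≤ M := le_csSup hbdd ⟨s, hs, rfl⟩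
    have h2 : (0:ℝ) < Real.exp (b*s) := Real.exp_pos _
    have h3 : ‖f s‖ * Real.exp (-(b*s)) * Real.exp (b*s) ≤ M * Real.exp (b*s) :=
      mul_le_mul_of_nonneg_right h1 h2.le
    rwa [mul_assoc, ← Real.exp_add, neg_add_cancel, Real.exp_zero, mul_one] at h3
  -- facts about the integral
  have hIint : IntegrableOn (fun t => Real.exp (-(b*t)) * ‖g t‖) (Set.Icc 0 D) := by
    refine Integrable.mono' hg.norm
      (((Real.continuous_exp.comp
        (continuous_const.mul continuous_id).neg).aestronglyMeasurable).mul hg.1.norm) ?_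
    filter_upwards [ae_restrict_mem measurableSet_Icc] with t ht
    have h1 : Real.exp (-(b*t)) ≤ 1 := by
      have := Real.exp_le_exp.mpr (show -(b*t) ≤ 0 by nlinarith [ht.1])
      simpa using this
    have h2 : ‖Real.exp (-(b*t)) * ‖g t‖‖ = Real.exp (-(b*t)) * ‖g t‖ :=
      Real.norm_of_nonneg (by positivity)
    rw [h2]
    nlinarith [norm_nonneg (g t), Real.exp_nonneg (-(b*t))]
  have hI0 : 0 ≤ I := integral_nonneg fun t => by positivity
  have hJeq : ENNReal.ofReal I = J := by
    rw [hI, MeasureTheory.ofReal_integral_eq_lintegral_ofReal hIint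
      (ae_of_all _ fun t => by positivity)]
    have h1 : (∫⁻ t in Set.Icc (0:ℝ) D, ENNReal.ofReal (Real.exp (-(b*t)) * ‖g t‖)) =
        ∫⁻ t in Set.Ioc (0:ℝ) D, ENNReal.ofReal (Real.exp (-(b*t)) * ‖g t‖) :=
      setLIntegral_congr MeasureTheory.Ioc_ae_eq_Icc.symm
    have h2 : ∀ᵐ t ∂(volume.restrict (Set.Ioc (0:ℝ) D)),
        ENNReal.ofReal (Real.exp (-(b*t)) * ‖g t‖) =
        ENNReal.ofReal (Real.exp (-(b*t))) * ‖g' t‖₊ := by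
      filter_upwards [ae_restrict_of_ae_restrict_of_subset Set.Ioc_subset_Icc_self hgg'] with t htg
      rw [ENNReal.ofReal_mul (Real.exp_nonneg _), htg, ofReal_norm, enorm_eq_nnnorm]
    rw [h1, lintegral_congr_ae h2]
  have hψ : Measurable fun u => ENNReal.ofReal (Real.exp (-(b*u))) *
      (‖convIter g' k u‖₊ : ℝ≥0∞) :=
    ((ENNReal.measurable_ofReal.comp
      ((Real.continuous_exp.measurable).comp (measurable_const.mul measurable_id).neg)).mul
      ((ConvPowAux.convIter_sm hg'm k).measurable.enorm))
  -- the key estimate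
  have hnorm : (‖conv f (convIter g' k) p‖₊ : ℝ≥0∞) ≤
      ENNReal.ofReal (M * Real.exp (b*p)) * J ^ (k+1) := by
    refine le_trans (ConvPowAux.conv_nnnorm_le hp0) ?_
    calc (∫⁻ s in Set.Ioc 0 p, (‖f s‖₊ : ℝ≥0∞) * ‖convIter g' k (p - s)‖₊)
        ≤ ∫⁻ s in Set.Ioc 0 p, ENNReal.ofReal (M * Real.exp (b*p)) *
            (ENNReal.ofReal (Real.exp (-(b*(p - s)))) * ‖convIter g' k (p - s)‖₊) := by
          refine lintegral_mono_ae ((ae_restrict_mem measurableSet_Ioc).mono fun s hs => ?_)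
          rw [← mul_assoc]
          refine mul_le_mul_left ?_ _
          rw [← enorm_eq_nnnorm, ← ofReal_norm,
            ← ENNReal.ofReal_mul (mul_nonneg hM0 (Real.exp_nonneg _))]
          apply ENNReal.ofReal_le_ofReal
          have hsIcc : s ∈ Set.Icc (0:ℝ) D := ⟨hs.1.le, hs.2.trans hpD⟩
          calc ‖f s‖ ≤ M * Real.exp (b*s) := hfM s hsIcc
            _ = M * Real.exp (b*p) * Real.exp (-(b*(p - s))) := by
                rw [mul_assoc, ← Real.exp_add]; ring_nf
      _ = ENNReal.ofReal (M * Real.exp (b*p)) *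
            ∫⁻ s in Set.Ioc 0 p, ENNReal.ofReal (Real.exp (-(b*(p - s)))) *
              ‖convIter g' k (p - s)‖₊ :=
          lintegral_const_mul _ (hψ.comp (measurable_const.sub measurable_id))
      _ = ENNReal.ofReal (M * Real.exp (b*p)) *
            ∫⁻ u in Set.Ico 0 p, ENNReal.ofReal (Real.exp (-(b*u))) * ‖convIter g' k u‖₊ := by
          rw [ConvPowAux.reflect
            (fun u => ENNReal.ofReal (Real.exp (-(b*u))) * (‖convIter g' k u‖₊ : ℝ≥0∞)) hψ]
      _ = ENNReal.ofReal (M * Real.exp (b*p)) *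
            ∫⁻ u in Set.Ioc 0 p, ENNReal.ofReal (Real.exp (-(b*u))) * ‖convIter g' k u‖₊ := by
          rw [setLIntegral_congr MeasureTheory.Ico_ae_eq_Ioc]
      _ ≤ ENNReal.ofReal (M * Real.exp (b*p)) * J ^ (k+1) :=
          mul_le_mul_right (ConvPowAux.iter_bound hg'm k p ⟨hp0, hpD⟩) _
  have hfin : ENNReal.ofReal ‖conv f (convIter g' k) p‖ ≤
      ENNReal.ofReal (M * Real.exp (b*p) * I ^ (k+1)) := by
    rw [ofReal_norm, enorm_eq_nnnorm, ENNReal.ofReal_mul (mul_nonneg hM0 (Real.exp_nonneg _)),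
      ENNReal.ofReal_pow hI0, hJeq]
    exact hnorm
  have hle : ‖conv f (convIter g' k) p‖ ≤ M * Real.exp (b*p) * I ^ (k+1) :=
    (ENNReal.ofReal_le_ofReal_iff
      (mul_nonneg (mul_nonneg hM0 (Real.exp_nonneg _)) (pow_nonneg hI0 _))).1 hfin
  have hRHSeq : D⁻¹ * Real.exp (b*p) * (D * M) * I ^ (k+1) =
      M * Real.exp (b*p) * I ^ (k+1) := by
    field_simp
  rw [hRHSeq]
  exact hle
end

section
/- If A, B are analytic on D_ε and r, q > -1, then ∫₀^z s^r A(s) (z-s)^q B(z-s) ds = z^{r+q+1} ∫₀^1 t^r (1-t)^q A(zt) B(z(1-t)) dt; consequently, if f(z) = z^r A(z) and g(z) = z^q B(z) with A, B analytic at 0, then (f*g)(z) = z^{r+q+1} C(z) with C analytic at 0. -/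
open MeasureTheory

private lemma mul_ofReal_cpow {w : ℂ} (hw : w ≠ 0) {s : ℝ} (hs : 0 < s) (y : ℂ) :
    (w * (s : ℂ)) ^ y = w ^ y * (s : ℂ) ^ y := by
  have hs' : (s : ℂ) ≠ 0 := Complex.ofReal_ne_zero.mpr hs.ne'
  rw [Complex.cpow_def_of_ne_zero (mul_ne_zero hw hs'), Complex.cpow_def_of_ne_zero hw,
    Complex.cpow_def_of_ne_zero hs', Complex.log_mul_ofReal s hs w hw,
    Complex.ofReal_log hs.le, add_mul, Complex.exp_add, mul_comm]

private lemma betaInt {r q : ℝ} (hr : -1 < r) (hq : -1 < q) :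
    IntervalIntegrable (fun t : ℝ => (t : ℂ) ^ (r : ℂ) * ((1 : ℂ) - (t : ℂ)) ^ (q : ℂ))
      MeasureTheory.volume 0 1 := by
  have h := Complex.betaIntegral_convergent (u := (r : ℂ) + 1) (v := (q : ℂ) + 1)
    (by simp; linarith) (by simp; linarith)
  simpa using h

private lemma contc {r q : ℝ} :
    ContinuousOn (fun t : ℝ => (t : ℂ) ^ (r : ℂ) * ((1 : ℂ) - (t : ℂ)) ^ (q : ℂ))
      (Set.Ioo 0 1) := by
  have h1 : ContinuousOn (fun t : ℝ => (t : ℂ) ^ (r : ℂ)) (Set.Ioo 0 1) :=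
    ContinuousOn.cpow_const (Complex.continuous_ofReal.continuousOn)
      (fun a ha => Complex.mem_slitPlane_iff.mpr (Or.inl (by simpa using ha.1)))
  have h2 : ContinuousOn (fun t : ℝ => ((1 : ℂ) - (t : ℂ)) ^ (q : ℂ)) (Set.Ioo 0 1) :=
    ContinuousOn.cpow_const ((continuous_const.sub Complex.continuous_ofReal).continuousOn)
      (fun a ha => Complex.mem_slitPlane_iff.mpr (Or.inl (by simp; linarith [ha.2])))
  exact h1.mul h2

private lemma aesm_of_contOn {f : ℝ → ℂ} (hf : ContinuousOn f (Set.Ioo 0 1)) :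
    AEStronglyMeasurable f (MeasureTheory.volume.restrict (Set.uIoc (0 : ℝ) 1)) := by
  rw [Set.uIoc_of_le zero_le_one,
    ← MeasureTheory.Measure.restrict_congr_set MeasureTheory.Ioo_ae_eq_Ioc]
  exact hf.aestronglyMeasurable measurableSet_Ioo

private lemma contOn_comp {ε : ℝ} {G : ℂ → ℂ} (hG : ContinuousOn G (Metric.ball 0 ε))
    {x : ℂ} (hx : ‖x‖ < ε) :
    ContinuousOn (fun t : ℝ => G (x * (t : ℂ))) (Set.Icc 0 1) ∧
      ContinuousOn (fun t : ℝ => G (x * ((1 : ℂ) - (t : ℂ)))) (Set.Icc 0 1) := by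
  have key : ∀ w : ℂ, ‖w‖ ≤ 1 → x * w ∈ Metric.ball (0 : ℂ) ε := by
    intro w hw
    rw [Metric.mem_ball, dist_zero_right, norm_mul]
    calc ‖x‖ * ‖w‖ ≤ ‖x‖ * 1 := mul_le_mul_of_nonneg_left hw (norm_nonneg _)
      _ = ‖x‖ := mul_one _
      _ < ε := hx
  constructor
  · refine hG.comp (Continuous.continuousOn (by fun_prop)) ?_
    intro t ht
    refine key _ ?_
    rw [Complex.norm_real, Real.norm_eq_abs, abs_le]
    exact ⟨by linarith [ht.1], ht.2⟩
  · refine hG.comp (Continuous.continuousOn (by fun_prop)) ?_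
    intro t ht
    refine key _ ?_
    have he : (1 : ℂ) - (t : ℂ) = ((1 - t : ℝ) : ℂ) := by push_cast; ring
    rw [he, Complex.norm_real, Real.norm_eq_abs, abs_le]
    exact ⟨by linarith [ht.2], by linarith [ht.1]⟩

private lemma ae_ne_one : ∀ᵐ t : ℝ, t ≠ (1 : ℝ) := by
  rw [MeasureTheory.ae_iff]
  simpa using MeasureTheory.measure_singleton (1 : ℝ)

/-- for `A, B` analytic on `D_ε` and `r, q > -1`,
`∫₀^z s^r A(s) (z-s)^q B(z-s) ds = z^{r+q+1} ∫₀^1 t^r (1-t)^q A(zt) B(z(1-t)) dt`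
(the left side parametrized along the segment from `0` to `z`); consequently the
convolution of `z^r·(analytic)` and `z^q·(analytic)` is `z^{r+q+1}·(analytic)`:
the factor `z ↦ ∫₀^1 t^r (1-t)^q A(zt) B(z(1-t)) dt` is analytic on `D_ε`. -/
theorem conv_rpow_analytic (ε : ℝ) (hε : 0 < ε) (A B : ℂ → ℂ)
    (hA : AnalyticOnNhd ℂ A (Metric.ball 0 ε))
    (hB : AnalyticOnNhd ℂ B (Metric.ball 0 ε)) (r q : ℝ) (hr : -1 < r) (hq : -1 < q) :
    AnalyticOnNhd ℂ
        (fun z => ∫ t in (0:ℝ)..1,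
          (t:ℂ) ^ (r:ℂ) * ((1:ℂ) - (t:ℂ)) ^ (q:ℂ) * A (z * (t:ℂ)) * B (z * ((1:ℂ) - (t:ℂ))))
        (Metric.ball 0 ε) ∧
      ∀ z ∈ Metric.ball (0:ℂ) ε, z ∉ {w : ℂ | w.re ≤ 0 ∧ w.im = 0} →
        z * ∫ t in (0:ℝ)..1,
            (z * (t:ℂ)) ^ (r:ℂ) * A (z * (t:ℂ))
              * (z * ((1:ℂ) - (t:ℂ))) ^ (q:ℂ) * B (z * ((1:ℂ) - (t:ℂ)))
          = z ^ ((r:ℂ) + (q:ℂ) + 1) * ∫ t in (0:ℝ)..1,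
              (t:ℂ) ^ (r:ℂ) * ((1:ℂ) - (t:ℂ)) ^ (q:ℂ)
                * A (z * (t:ℂ)) * B (z * ((1:ℂ) - (t:ℂ))) := by
  constructor
  · have hAc := hA.continuousOn
    have hBc := hB.continuousOn
    have hA'c := (hA.deriv).continuousOn
    have hB'c := (hB.deriv).continuousOn
    refine DifferentiableOn.analyticOnNhd ?_ Metric.isOpen_ball
    intro z₀ hz₀'
    have hz₀ : ‖z₀‖ < ε := by rwa [Metric.mem_ball, dist_zero_right] at hz₀'
    set K : ℝ := (‖z₀‖ + ε) / 2 with hKdef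
    have hK1 : ‖z₀‖ < K := by rw [hKdef]; linarith
    have hK2 : K < ε := by rw [hKdef]; linarith
    have hK0 : (0:ℝ) ≤ K := le_trans (norm_nonneg _) hK1.le
    have hsub : Metric.closedBall (0:ℂ) K ⊆ Metric.ball (0:ℂ) ε :=
      Metric.closedBall_subset_ball hK2
    obtain ⟨MA, hMA⟩ := (isCompact_closedBall (0:ℂ) K).exists_bound_of_continuousOn
      (hAc.mono hsub)
    obtain ⟨MB, hMB⟩ := (isCompact_closedBall (0:ℂ) K).exists_bound_of_continuousOn
      (hBc.mono hsub)
    obtain ⟨MA', hMA'⟩ := (isCompact_closedBall (0:ℂ) K).exists_bound_of_continuousOn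
      (hA'c.mono hsub)
    obtain ⟨MB', hMB'⟩ := (isCompact_closedBall (0:ℂ) K).exists_bound_of_continuousOn
      (hB'c.mono hsub)
    have h0K : (0:ℂ) ∈ Metric.closedBall (0:ℂ) K := by
      simpa [Metric.mem_closedBall] using hK0
    have hMA0 : 0 ≤ MA := le_trans (norm_nonneg _) (hMA 0 h0K)
    have hMB0 : 0 ≤ MB := le_trans (norm_nonneg _) (hMB 0 h0K)
    have hMA'0 : 0 ≤ MA' := le_trans (norm_nonneg _) (hMA' 0 h0K)
    have hMB'0 : 0 ≤ MB' := le_trans (norm_nonneg _) (hMB' 0 h0K)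
    set δ : ℝ := K - ‖z₀‖ with hδdef
    have hδ : 0 < δ := sub_pos.mpr hK1
    have hxK : ∀ x ∈ Metric.ball z₀ δ, ‖x‖ < K := by
      intro x hx
      rw [Metric.mem_ball, dist_eq_norm] at hx
      have h2 : ‖x‖ - ‖z₀‖ ≤ ‖x - z₀‖ := norm_sub_norm_le x z₀
      linarith
    have hmem : ∀ x : ℂ, ‖x‖ < K → ∀ w : ℂ, ‖w‖ ≤ 1 →
        x * w ∈ Metric.closedBall (0:ℂ) K := by
      intro x hx w hw
      rw [Metric.mem_closedBall, dist_zero_right, norm_mul]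
      nlinarith [norm_nonneg x]
    have nt : ∀ t : ℝ, t ∈ Set.Ioo (0:ℝ) 1 → ‖((t:ℝ):ℂ)‖ ≤ 1 := by
      intro t ht
      rw [Complex.norm_real, Real.norm_eq_abs, abs_le]
      exact ⟨by linarith [ht.1], ht.2.le⟩
    have nt' : ∀ t : ℝ, t ∈ Set.Ioo (0:ℝ) 1 → ‖(1:ℂ) - ((t:ℝ):ℂ)‖ ≤ 1 := by
      intro t ht
      have he : (1:ℂ) - (t:ℂ) = ((1 - t : ℝ) : ℂ) := by push_cast; ring
      rw [he, Complex.norm_real, Real.norm_eq_abs, abs_le]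
      exact ⟨by linarith [ht.2], by linarith [ht.1]⟩
    set C : ℝ := MA' * MB + MA * MB' with hCdef
    have key := intervalIntegral.hasDerivAt_integral_of_dominated_loc_of_deriv_le
      (𝕜 := ℂ) (μ := MeasureTheory.volume) (a := (0:ℝ)) (b := (1:ℝ)) (x₀ := z₀)
      (F := fun x t => (t:ℂ) ^ (r:ℂ) * ((1:ℂ) - (t:ℂ)) ^ (q:ℂ)
        * A (x * (t:ℂ)) * B (x * ((1:ℂ) - (t:ℂ))))
      (F' := fun x t =>
        (t:ℂ) ^ (r:ℂ) * ((1:ℂ) - (t:ℂ)) ^ (q:ℂ)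
          * (deriv A (x * (t:ℂ)) * (t:ℂ)) * B (x * ((1:ℂ) - (t:ℂ)))
        + (t:ℂ) ^ (r:ℂ) * ((1:ℂ) - (t:ℂ)) ^ (q:ℂ)
          * A (x * (t:ℂ)) * (deriv B (x * ((1:ℂ) - (t:ℂ))) * ((1:ℂ) - (t:ℂ))))
      (bound := fun t : ℝ => ‖(t:ℂ) ^ (r:ℂ) * ((1:ℂ) - (t:ℂ)) ^ (q:ℂ)‖ * C)
      (Metric.ball_mem_nhds z₀ hδ) ?_ ?_ ?_ ?_ ?_ ?_
    · exact key.2.differentiableAt.differentiableWithinAt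
    · -- hF_meas
      filter_upwards [Metric.ball_mem_nhds z₀ hδ] with x hx
      have hxε : ‖x‖ < ε := lt_trans (hxK x hx) hK2
      refine aesm_of_contOn ?_
      exact (contc.mul ((contOn_comp hAc hxε).1.mono Set.Ioo_subset_Icc_self)).mul
        ((contOn_comp hBc hxε).2.mono Set.Ioo_subset_Icc_self)
    · -- hF_int
      have h1 := (contOn_comp hAc hz₀).1
      have h2 := (contOn_comp hBc hz₀).2
      rw [show Set.Icc (0:ℝ) 1 = Set.uIcc (0:ℝ) 1 from (Set.uIcc_of_le zero_le_one).symm]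
        at h1 h2
      exact ((betaInt hr hq).mul_continuousOn h1).mul_continuousOn h2
    · -- hF'_meas
      have hz₀K : ‖z₀‖ < ε := hz₀
      refine aesm_of_contOn ?_
      refine ContinuousOn.add ?_ ?_
      · exact (contc.mul
          ((((contOn_comp hA'c hz₀K).1.mono Set.Ioo_subset_Icc_self).mul
            (Complex.continuous_ofReal.continuousOn)))).mul
          ((contOn_comp hBc hz₀K).2.mono Set.Ioo_subset_Icc_self)
      · exact (contc.mul
          ((contOn_comp hAc hz₀K).1.mono Set.Ioo_subset_Icc_self)).mul
          ((((contOn_comp hB'c hz₀K).2.mono Set.Ioo_subset_Icc_self)).mul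
            ((continuous_const.sub Complex.continuous_ofReal).continuousOn))
    · -- h_bound
      filter_upwards [ae_ne_one] with t ht htI x hx
      rw [Set.uIoc_of_le zero_le_one] at htI
      have htO : t ∈ Set.Ioo (0:ℝ) 1 := ⟨htI.1, lt_of_le_of_ne htI.2 ht⟩
      have hxK' : ‖x‖ < K := hxK x hx
      have mem1 : x * (t:ℂ) ∈ Metric.closedBall (0:ℂ) K := hmem x hxK' _ (nt t htO)
      have mem2 : x * ((1:ℂ) - (t:ℂ)) ∈ Metric.closedBall (0:ℂ) K :=
        hmem x hxK' _ (nt' t htO)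
      have hdA : ‖deriv A (x * (t:ℂ)) * (t:ℂ)‖ ≤ MA' := by
        rw [norm_mul]
        calc ‖deriv A (x * (t:ℂ))‖ * ‖((t:ℝ):ℂ)‖ ≤ MA' * 1 :=
              mul_le_mul (hMA' _ mem1) (nt t htO) (norm_nonneg _) hMA'0
          _ = MA' := mul_one _
      have hdB : ‖deriv B (x * ((1:ℂ) - (t:ℂ))) * ((1:ℂ) - (t:ℂ))‖ ≤ MB' := by
        rw [norm_mul]
        calc ‖deriv B (x * ((1:ℂ) - (t:ℂ)))‖ * ‖(1:ℂ) - ((t:ℝ):ℂ)‖ ≤ MB' * 1 :=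
              mul_le_mul (hMB' _ mem2) (nt' t htO) (norm_nonneg _) hMB'0
          _ = MB' := mul_one _
      have hAv : ‖A (x * (t:ℂ))‖ ≤ MA := hMA _ mem1
      have hBv : ‖B (x * ((1:ℂ) - (t:ℂ)))‖ ≤ MB := hMB _ mem2
      set ct : ℂ := (t:ℂ) ^ (r:ℂ) * ((1:ℂ) - (t:ℂ)) ^ (q:ℂ) with hct
      have e1 : ‖ct * (deriv A (x * (t:ℂ)) * (t:ℂ)) * B (x * ((1:ℂ) - (t:ℂ)))‖
          ≤ ‖ct‖ * (MA' * MB) := by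
        rw [norm_mul, norm_mul]
        calc ‖ct‖ * ‖deriv A (x * (t:ℂ)) * (t:ℂ)‖ * ‖B (x * ((1:ℂ) - (t:ℂ)))‖
            ≤ ‖ct‖ * MA' * MB := by
              refine mul_le_mul (mul_le_mul_of_nonneg_left hdA (norm_nonneg _)) hBv
                (norm_nonneg _) (mul_nonneg (norm_nonneg _) hMA'0)
          _ = ‖ct‖ * (MA' * MB) := by ring
      have e2 : ‖ct * A (x * (t:ℂ)) * (deriv B (x * ((1:ℂ) - (t:ℂ))) * ((1:ℂ) - (t:ℂ)))‖
          ≤ ‖ct‖ * (MA * MB') := by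
        rw [norm_mul, norm_mul]
        calc ‖ct‖ * ‖A (x * (t:ℂ))‖ * ‖deriv B (x * ((1:ℂ) - (t:ℂ))) * ((1:ℂ) - (t:ℂ))‖
            ≤ ‖ct‖ * MA * MB' := by
              refine mul_le_mul (mul_le_mul_of_nonneg_left hAv (norm_nonneg _)) hdB
                (norm_nonneg _) (mul_nonneg (norm_nonneg _) hMA0)
          _ = ‖ct‖ * (MA * MB') := by ring
      calc ‖ct * (deriv A (x * (t:ℂ)) * (t:ℂ)) * B (x * ((1:ℂ) - (t:ℂ)))
            + ct * A (x * (t:ℂ)) * (deriv B (x * ((1:ℂ) - (t:ℂ))) * ((1:ℂ) - (t:ℂ)))‖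
          ≤ ‖ct * (deriv A (x * (t:ℂ)) * (t:ℂ)) * B (x * ((1:ℂ) - (t:ℂ)))‖
            + ‖ct * A (x * (t:ℂ)) * (deriv B (x * ((1:ℂ) - (t:ℂ))) * ((1:ℂ) - (t:ℂ)))‖ :=
              norm_add_le _ _
        _ ≤ ‖ct‖ * (MA' * MB) + ‖ct‖ * (MA * MB') := add_le_add e1 e2
        _ = ‖ct‖ * C := by rw [hCdef]; ring
    · -- bound_integrable
      exact ((betaInt hr hq).norm).mul_const C
    · -- h_diff
      filter_upwards [ae_ne_one] with t ht htI x hx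
      rw [Set.uIoc_of_le zero_le_one] at htI
      have htO : t ∈ Set.Ioo (0:ℝ) 1 := ⟨htI.1, lt_of_le_of_ne htI.2 ht⟩
      have hxK' : ‖x‖ < K := hxK x hx
      have mem1 : x * (t:ℂ) ∈ Metric.ball (0:ℂ) ε := hsub (hmem x hxK' _ (nt t htO))
      have mem2 : x * ((1:ℂ) - (t:ℂ)) ∈ Metric.ball (0:ℂ) ε :=
        hsub (hmem x hxK' _ (nt' t htO))
      have hdA : HasDerivAt A (deriv A (x * (t:ℂ))) (x * (t:ℂ)) :=
        (hA _ mem1).differentiableAt.hasDerivAt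
      have hdB : HasDerivAt B (deriv B (x * ((1:ℂ) - (t:ℂ)))) (x * ((1:ℂ) - (t:ℂ))) :=
        (hB _ mem2).differentiableAt.hasDerivAt
      have hiA : HasDerivAt (fun z : ℂ => z * (t:ℂ)) ((t:ℂ)) x := hasDerivAt_mul_const _
      have hiB : HasDerivAt (fun z : ℂ => z * ((1:ℂ) - (t:ℂ))) ((1:ℂ) - (t:ℂ)) x :=
        hasDerivAt_mul_const _
      have hcompA : HasDerivAt (fun z : ℂ => A (z * (t:ℂ)))
          (deriv A (x * (t:ℂ)) * (t:ℂ)) x := hdA.comp x hiA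
      have hcompB : HasDerivAt (fun z : ℂ => B (z * ((1:ℂ) - (t:ℂ))))
          (deriv B (x * ((1:ℂ) - (t:ℂ))) * ((1:ℂ) - (t:ℂ))) x := hdB.comp x hiB
      have h1 : HasDerivAt (fun z : ℂ => (t:ℂ) ^ (r:ℂ) * ((1:ℂ) - (t:ℂ)) ^ (q:ℂ)
            * A (z * (t:ℂ)))
          ((t:ℂ) ^ (r:ℂ) * ((1:ℂ) - (t:ℂ)) ^ (q:ℂ) * (deriv A (x * (t:ℂ)) * (t:ℂ))) x :=
        hcompA.const_mul _
      exact h1.mul hcompB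

  · intro z hz hzs
    have hz0 : z ≠ 0 := by
      rintro rfl
      exact hzs ⟨by simp, by simp⟩
    have hcongr : ∀ᵐ t : ℝ, t ∈ Set.uIoc (0:ℝ) 1 →
        (z * (t:ℂ)) ^ (r:ℂ) * A (z * (t:ℂ))
            * (z * ((1:ℂ) - (t:ℂ))) ^ (q:ℂ) * B (z * ((1:ℂ) - (t:ℂ)))
          = (z ^ (r:ℂ) * z ^ (q:ℂ)) *
            ((t:ℂ) ^ (r:ℂ) * ((1:ℂ) - (t:ℂ)) ^ (q:ℂ)
              * A (z * (t:ℂ)) * B (z * ((1:ℂ) - (t:ℂ)))) := by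
      filter_upwards [ae_ne_one] with t ht htI
      rw [Set.uIoc_of_le zero_le_one] at htI
      have ht0 : 0 < t := htI.1
      have ht1 : t < 1 := lt_of_le_of_ne htI.2 ht
      have h1 : (z * (t:ℂ)) ^ (r:ℂ) = z ^ (r:ℂ) * (t:ℂ) ^ (r:ℂ) :=
        mul_ofReal_cpow hz0 ht0 _
      have h2 : (z * ((1:ℂ) - (t:ℂ))) ^ (q:ℂ) = z ^ (q:ℂ) * ((1:ℂ) - (t:ℂ)) ^ (q:ℂ) := by
        have he : (1:ℂ) - (t:ℂ) = ((1 - t : ℝ) : ℂ) := by push_cast; ring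
        rw [he]
        exact mul_ofReal_cpow hz0 (by linarith) _
      rw [h1, h2]; ring
    rw [intervalIntegral.integral_congr_ae hcongr, intervalIntegral.integral_const_mul]
    have hzpow : z ^ ((r:ℂ) + (q:ℂ) + 1) = z ^ (r:ℂ) * z ^ (q:ℂ) * z := by
      rw [Complex.cpow_add _ _ hz0, Complex.cpow_add _ _ hz0, Complex.cpow_one]
    rw [hzpow]; ring
end
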